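/- Let X = ℝ × {1,2} (two disjoint copies ℝ₁, ℝ₂ of the real line) with the partial order (x,i) ≼ (y,j) ⟺ (i = j and x ≤ y) or (i ≠ j and x < 0 and 0 ≤ y), and endow X with the Upper topology of ≼. Then there exists no finite lower-semicontinuous Richter–Peleg multi-utility for ≼ with respect to this topology. -/

import Mathlib

/-- Two copies of the real line: `ℝ × Fin 2`. -/
abbrev StmtEightX : Type := ℝ × Fin 2

/-- The partial order of Example `ceupper`: within a copy the usual order;
across copies, `(x,i) ≼ (y,j)` iff `x < 0 ≤ y`. -/
def stmtEightRel (p q : StmtEightX) : Prop :=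
  (p.2 = q.2 ∧ p.1 ≤ q.1) ∨ (p.2 ≠ q.2 ∧ p.1 < 0 ∧ 0 ≤ q.1)

/-- The Upper topology of the relation. -/
def stmtEightUpper : TopologicalSpace StmtEightX :=
  TopologicalSpace.generateFrom
    {S : Set StmtEightX | ∃ a : StmtEightX, S = {t : StmtEightX | stmtEightRel t a}ᶜ}

/-- Every nonempty open set of the upper topology contains a tail of both copies. -/
lemma stmtEight_tail {S : Set StmtEightX}
    (h : TopologicalSpace.GenerateOpen
      {S : Set StmtEightX | ∃ a : StmtEightX, S = {t : StmtEightX | stmtEightRel t a}ᶜ} S) :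
    S.Nonempty → ∃ M : ℝ, ∀ t ≥ M, ∀ i : Fin 2, ((t, i) : StmtEightX) ∈ S := by
  induction h with
  | basic S hS =>
    intro _
    obtain ⟨a, rfl⟩ := hS
    refine ⟨max (a.1 + 1) 1, fun t ht i => ?_⟩
    have h1 : a.1 < t := lt_of_lt_of_le (by linarith [le_max_left (a.1 + 1) 1]) le_rfl |>.trans_le ht
    have h2 : (0 : ℝ) < t := lt_of_lt_of_le (by linarith [le_max_right (a.1 + 1) 1]) ht
    simp only [Set.mem_compl_iff, Set.mem_setOf_eq, stmtEightRel]
    rintro (⟨-, hle⟩ | ⟨-, hlt, -⟩)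
    · exact absurd hle (not_le.mpr h1)
    · exact absurd hlt (not_lt.mpr h2.le)
  | univ => exact fun _ => ⟨0, fun t _ i => trivial⟩
  | inter S T hS hT ihS ihT =>
    rintro ⟨p, hpS, hpT⟩
    obtain ⟨M₁, h₁⟩ := ihS ⟨p, hpS⟩
    obtain ⟨M₂, h₂⟩ := ihT ⟨p, hpT⟩
    exact ⟨max M₁ M₂, fun t ht i => ⟨h₁ t (le_trans (le_max_left _ _) ht) i,
      h₂ t (le_trans (le_max_right _ _) ht) i⟩⟩
  | sUnion 𝒮 h ih =>
    rintro ⟨p, s, hs, hps⟩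
    obtain ⟨M, hM⟩ := ih s hs ⟨p, hps⟩
    exact ⟨M, fun t ht i => ⟨s, hs, hM t ht i⟩⟩

/-- On two copies of `ℝ` with the order above, endowed with the
Upper topology, there is no finite lower-semicontinuous Richter–Peleg
multi-utility. -/
theorem no_finite_lsc_RP_multiutility_upper :
    ¬ ∃ U : Set (StmtEightX → ℝ), U.Finite ∧
      (∀ p q : StmtEightX, stmtEightRel p q ↔ ∀ u ∈ U, u p ≤ u q) ∧
      (∀ u ∈ U, ∀ p q : StmtEightX,
        (stmtEightRel p q ∧ ¬ stmtEightRel q p) → u p < u q) ∧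
      (∀ u ∈ U, @LowerSemicontinuous StmtEightX ℝ stmtEightUpper _ u) := by
  rintro ⟨U, hfin, hiff, hstrict, hlsc⟩
  -- For each u ∈ U, there is M such that u (0,0) < u (t,1) for all t ≥ M.
  have key : ∀ u ∈ U, ∃ M : ℝ, ∀ t ≥ M, u ((0 : ℝ), (0 : Fin 2)) < u ((t : ℝ), (1 : Fin 2)) := by
    intro u hu
    have h01 : u ((0 : ℝ), (0 : Fin 2)) < u ((1 : ℝ), (0 : Fin 2)) := by
      apply hstrict u hu
      constructor
      · left; exact ⟨rfl, by norm_num⟩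
      · rintro (⟨-, h⟩ | ⟨h, -, -⟩)
        · norm_num at h
        · exact h rfl
    have hev := hlsc u hu ((1 : ℝ), (0 : Fin 2)) (u ((0 : ℝ), (0 : Fin 2))) h01
    rw [@eventually_nhds_iff _ stmtEightUpper] at hev
    obtain ⟨V, hVsub, hVopen, hVmem⟩ := hev
    have hgen : TopologicalSpace.GenerateOpen
        {S : Set StmtEightX | ∃ a : StmtEightX, S = {t : StmtEightX | stmtEightRel t a}ᶜ} V :=
      hVopen
    obtain ⟨M, hM⟩ := stmtEight_tail hgen ⟨_, hVmem⟩
    exact ⟨M, fun t ht => hVsub _ (hM t ht 1)⟩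
  choose! M hM using key
  obtain ⟨y, hy⟩ : ∃ y : ℝ, ∀ u ∈ U, M u ≤ y := by
    rcases (hfin.image M).bddAbove with ⟨y, hy⟩
    exact ⟨y, fun u hu => hy (Set.mem_image_of_mem M hu)⟩
  have hrel : stmtEightRel ((0 : ℝ), (0 : Fin 2)) ((y : ℝ), (1 : Fin 2)) :=
    (hiff _ _).mpr (fun u hu => (hM u hu y (hy u hu)).le)
  rcases hrel with ⟨h, -⟩ | ⟨-, h, -⟩
  · simp at h
  · norm_num at h
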